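/- (Unique maximizer of the α-potential function.) Consider an LQ network game satisfying the contraction assumption, and define φ(a) = −(1/2) Σ_{i=1}^N a_i² + Σ_{i=1}^N β_i a_i + (γ/2) Σ_{i=1}^N (Σ_{j=1}^N G_ij a_j) a_i. Then φ has a unique maximizer over 𝒜, given by a^α = (I − (γ/2)(G + Gᵀ))^{-1} β, and this point lies in 𝒜. -/

import Mathlib

open Matrix


lemma quad_form_eq' {N : ℕ} (G : Matrix (Fin N) (Fin N) ℝ) (γ : ℝ) (x : Fin N → ℝ) :
    x ⬝ᵥ ((1 - (γ/2) • (G + Gᵀ)) *ᵥ x)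
      = ∑ i, x i ^ 2 - γ * ∑ i, (∑ j, G i j * x j) * x i := by
  have h1 : x ⬝ᵥ (Gᵀ *ᵥ x) = x ⬝ᵥ (G *ᵥ x) := by
    rw [dotProduct_mulVec x Gᵀ x, vecMul_transpose, dotProduct_comm]
  have h2 : x ⬝ᵥ (G *ᵥ x) = ∑ i, (∑ j, G i j * x j) * x i := by
    simp only [dotProduct, mulVec]
    exact Finset.sum_congr rfl fun i _ => mul_comm _ _
  have h3 : x ⬝ᵥ x = ∑ i, x i ^ 2 := by simp [dotProduct, sq]
  rw [sub_mulVec, dotProduct_sub, one_mulVec, smul_mulVec, dotProduct_smul,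
    add_mulVec, dotProduct_add, h1, h2, h3]
  simp only [smul_eq_mul]
  ring

lemma quad_bound' {N : ℕ} (hN : 0 < N) (G : Matrix (Fin N) (Fin N) ℝ)
    (hGsmall : ∀ i j, |G i j| ≤ 1 / (N : ℝ)) (x : Fin N → ℝ) :
    |∑ i, (∑ j, G i j * x j) * x i| ≤ ∑ i, x i ^ 2 := by
  have hN' : (0:ℝ) < N := by exact_mod_cast hN
  calc |∑ i, (∑ j, G i j * x j) * x i|
      ≤ ∑ i, |(∑ j, G i j * x j) * x i| := Finset.abs_sum_le_sum_abs _ _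
    _ ≤ ∑ i, ((1 / (N:ℝ)) * ∑ j, |x j|) * |x i| := by
        refine Finset.sum_le_sum fun i _ => ?_
        rw [abs_mul]
        refine mul_le_mul_of_nonneg_right ?_ (abs_nonneg _)
        calc |∑ j, G i j * x j| ≤ ∑ j, |G i j * x j| := Finset.abs_sum_le_sum_abs _ _
          _ ≤ ∑ j, (1 / (N:ℝ)) * |x j| := by
              refine Finset.sum_le_sum fun j _ => ?_
              rw [abs_mul]
              exact mul_le_mul_of_nonneg_right (hGsmall i j) (abs_nonneg _)
          _ = (1 / (N:ℝ)) * ∑ j, |x j| := by rw [Finset.mul_sum]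
    _ = (1 / (N:ℝ)) * (∑ i, |x i|) ^ 2 := by
        rw [← Finset.mul_sum, sq]; ring
    _ ≤ (1 / (N:ℝ)) * ((N:ℝ) * ∑ i, |x i| ^ 2) := by
        refine mul_le_mul_of_nonneg_left ?_ (by positivity)
        have := sq_sum_le_card_mul_sum_sq (s := (Finset.univ : Finset (Fin N)))
          (f := fun i => |x i|)
        simpa using this
    _ = ∑ i, x i ^ 2 := by
        rw [← mul_assoc, one_div, inv_mul_cancel₀ hN'.ne', one_mul]
        exact Finset.sum_congr rfl fun i _ => sq_abs _

/-- **Unique maximizer of the α-potential function.** In an LQ network game satisfying the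
contraction assumption, the function
`φ(a) = −(1/2) Σ_i a_i² + Σ_i β_i a_i + (γ/2) Σ_i (Σ_j G_ij a_j) a_i` has a unique maximizer
over `𝒜`, given by `a^α = (I − (γ/2)(G + Gᵀ))⁻¹ β`, and this point lies in `𝒜`. -/
theorem unique_alpha_potential_maximizer
    {N : ℕ} (hN : 0 < N)
    (G : Matrix (Fin N) (Fin N) ℝ)
    (hdiag : ∀ i, G i i = 0)
    (hGsmall : ∀ i j, |G i j| ≤ 1 / (N : ℝ))
    (γ : ℝ) (hγ : |γ| < 1 / 2)
    (β : Fin N → ℝ)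
    (lo hi : Fin N → ℝ) (hlohi : ∀ i, lo i ≤ hi i)
    (A : Set (Fin N → ℝ)) (hA : A = Set.univ.pi fun i => Set.Icc (lo i) (hi i))
    (atil : ℝ) (hatil : 0 ≤ atil)
    (hsub : ∀ i, Set.Icc (-atil) atil ⊆ Set.Icc (lo i) (hi i))
    (hβ : ∀ i, |β i| ≤ (1 - 2 * |γ|) * atil)
    (φ : (Fin N → ℝ) → ℝ)
    (hφ : ∀ a, φ a = -(1/2) * ∑ i, a i ^ 2 + ∑ i, β i * a i
      + γ / 2 * ∑ i, (∑ j, G i j * a j) * a i)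
    (aα : Fin N → ℝ) (haα : aα = (1 - (γ / 2) • (G + Gᵀ))⁻¹ *ᵥ β) :
    aα ∈ A ∧ ∀ a ∈ A, a ≠ aα → φ a < φ aα := by
  have hN' : (0:ℝ) < N := by exact_mod_cast hN
  set M : Matrix (Fin N) (Fin N) ℝ := 1 - (γ / 2) • (G + Gᵀ) with hMdef
  -- positivity of quadratic form
  have hquadpos : ∀ x : Fin N → ℝ, x ≠ 0 → 0 < x ⬝ᵥ (M *ᵥ x) := by
    intro x hx
    rw [hMdef, quad_form_eq']
    have hb := quad_bound' hN G hGsmall x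
    have hxx : 0 < ∑ i, x i ^ 2 := by
      obtain ⟨i, hi⟩ := Function.ne_iff.mp hx
      refine Finset.sum_pos' (fun j _ => sq_nonneg _) ⟨i, Finset.mem_univ i, ?_⟩
      exact lt_of_le_of_ne (sq_nonneg _) (Ne.symm (pow_ne_zero 2 hi))
    have h1 : γ * ∑ i, (∑ j, G i j * x j) * x i ≤ |γ| * ∑ i, x i ^ 2 := by
      calc γ * ∑ i, (∑ j, G i j * x j) * x i
          ≤ |γ * ∑ i, (∑ j, G i j * x j) * x i| := le_abs_self _
        _ = |γ| * |∑ i, (∑ j, G i j * x j) * x i| := abs_mul _ _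
        _ ≤ |γ| * ∑ i, x i ^ 2 := mul_le_mul_of_nonneg_left hb (abs_nonneg _)
    nlinarith [abs_nonneg γ]
  -- symmetry
  have hsym : Mᵀ = M := by
    rw [hMdef]
    simp [Matrix.transpose_sub, Matrix.transpose_smul, Matrix.transpose_add,
      Matrix.transpose_one, Matrix.transpose_transpose, add_comm]
  have hherm : M.IsHermitian := by
    have : Mᴴ = Mᵀ := by ext i j; simp [Matrix.conjTranspose_apply]
    rw [Matrix.IsHermitian, this, hsym]
  have hposdef : M.PosDef := by
    refine Matrix.PosDef.of_dotProduct_mulVec_pos hherm fun x hx => ?_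
    have hst : star x = x := by funext i; exact star_trivial _
    rw [hst]
    exact hquadpos x hx
  have hdet : IsUnit M.det := hposdef.det_pos.ne'.isUnit
  have hMinv : M * M⁻¹ = 1 := Matrix.mul_nonsing_inv M hdet
  have hMaα : M *ᵥ aα = β := by
    rw [haα, mulVec_mulVec, hMinv, one_mulVec]
  -- component equation
  have hvec : aα = β + (γ / 2) • ((G + Gᵀ) *ᵥ aα) := by
    have hms : M *ᵥ aα = aα - (γ / 2) • ((G + Gᵀ) *ᵥ aα) := by
      rw [hMdef, sub_mulVec, one_mulVec, smul_mulVec]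
    rw [hms] at hMaα
    exact sub_eq_iff_eq_add.mp hMaα
  have hcomp : ∀ i, aα i = β i + γ / 2 * ∑ j, (G i j + G j i) * aα j := by
    intro i
    have h := congrFun hvec i
    simp only [Pi.add_apply, Pi.smul_apply, smul_eq_mul, mulVec, dotProduct,
      Matrix.add_apply, Matrix.transpose_apply] at h
    exact h
  -- sup bound
  have hfne : (Finset.univ : Finset (Fin N)).Nonempty := ⟨⟨0, hN⟩, Finset.mem_univ _⟩
  set m : ℝ := Finset.univ.sup' hfne fun i => |aα i| with hmdef
  obtain ⟨i0, -, hi0⟩ := Finset.exists_mem_eq_sup' hfne fun i => |aα i|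
  have hm : ∀ j, |aα j| ≤ m := fun j => Finset.le_sup' (fun i => |aα i|) (Finset.mem_univ j)
  have hm0 : 0 ≤ m := (abs_nonneg _).trans (hm ⟨0, hN⟩)
  have hkey : m ≤ |β i0| + |γ| * m := by
    have hsum : |∑ j, (G i0 j + G j i0) * aα j| ≤ 2 * m := by
      calc |∑ j, (G i0 j + G j i0) * aα j|
          ≤ ∑ j, |(G i0 j + G j i0) * aα j| := Finset.abs_sum_le_sum_abs _ _
        _ ≤ ∑ j : Fin N, (2 / (N:ℝ)) * m := by
            refine Finset.sum_le_sum fun j _ => ?_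
            rw [abs_mul]
            have h1 : |G i0 j + G j i0| ≤ 2 / (N:ℝ) := by
              calc |G i0 j + G j i0| ≤ |G i0 j| + |G j i0| := abs_add_le _ _
                _ ≤ 1 / (N:ℝ) + 1 / (N:ℝ) := add_le_add (hGsmall _ _) (hGsmall _ _)
                _ = 2 / (N:ℝ) := by ring
            exact mul_le_mul h1 (hm j) (abs_nonneg _) (by positivity)
        _ = 2 * m := by
            rw [Finset.sum_const, Finset.card_univ, Fintype.card_fin, nsmul_eq_mul]
            field_simp
    have hmi0 : m = |aα i0| := hi0
    refine le_trans (le_of_eq (hmi0.trans (congrArg abs (hcomp i0)))) ?_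
    calc |β i0 + γ / 2 * ∑ j, (G i0 j + G j i0) * aα j|
        ≤ |β i0| + |γ / 2 * ∑ j, (G i0 j + G j i0) * aα j| := abs_add_le _ _
      _ = |β i0| + |γ| / 2 * |∑ j, (G i0 j + G j i0) * aα j| := by
          rw [abs_mul, abs_div, abs_two]
      _ ≤ |β i0| + |γ| / 2 * (2 * m) := by
          have := mul_le_mul_of_nonneg_left hsum (by positivity : (0:ℝ) ≤ |γ| / 2)
          linarith
      _ = |β i0| + |γ| * m := by ring
  have hmatil : m ≤ atil := by
    have hβ0 := hβ i0
    nlinarith [abs_nonneg γ, mul_nonneg (abs_nonneg γ) hatil]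
  have haαmem : aα ∈ A := by
    rw [hA]
    intro i _
    have := abs_le.mp ((hm i).trans hmatil)
    exact hsub i ⟨this.1, this.2⟩
  refine ⟨haαmem, fun a _ hne => ?_⟩
  -- strict maximizer
  have hφ' : ∀ y, φ y = β ⬝ᵥ y - 1/2 * (y ⬝ᵥ (M *ᵥ y)) := by
    intro y
    rw [hφ, hMdef, quad_form_eq']
    simp only [dotProduct]
    ring
  set d : Fin N → ℝ := a - aα with hddef
  have hd0 : d ≠ 0 := sub_ne_zero.mpr hne
  have ha' : a = d + aα := by rw [hddef]; abel
  have hsymdot : ∀ x y : Fin N → ℝ, x ⬝ᵥ (M *ᵥ y) = y ⬝ᵥ (M *ᵥ x) := by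
    intro x y
    rw [dotProduct_mulVec, ← hsym, vecMul_transpose, dotProduct_comm, hsym]
  have expand : a ⬝ᵥ (M *ᵥ a) = d ⬝ᵥ (M *ᵥ d) + 2 * (d ⬝ᵥ β) + aα ⬝ᵥ (M *ᵥ aα) := by
    rw [ha', mulVec_add, dotProduct_add, add_dotProduct, add_dotProduct,
      hsymdot aα d, hMaα]
    ring
  have hβa : β ⬝ᵥ a = β ⬝ᵥ d + β ⬝ᵥ aα := by rw [ha', dotProduct_add]
  have hlt : 0 < d ⬝ᵥ (M *ᵥ d) := hquadpos d hd0
  have hdc : d ⬝ᵥ β = β ⬝ᵥ d := dotProduct_comm _ _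
  rw [hφ' a, hφ' aα, expand, hβa]
  linarith
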